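/- Let h be a homeomorphism of ℝⁿ with compact support and (U_m)_{m∈ℤ} a sequence of pairwise disjoint open balls with h[U_m] = U_{m+1} for all m. Let g be a homeomorphism supported in U₀, and define f by f = hᵐ g h⁻ᵐ on U_m for m ≥ 0 and f = id elsewhere. Then f is a homeomorphism of ℝⁿ and g = f h f⁻¹ h⁻¹. -/

import Mathlib

open Pointwise Set Topology

noncomputable instance homeoGroup (X : Type*) [TopologicalSpace X] : Group (X ≃ₜ X) where
  mul f g := g.trans f
  one := Homeomorph.refl X
  inv := Homeomorph.symm
  mul_assoc _ _ _ := rfl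
  one_mul f := by ext x; rfl
  mul_one f := by ext x; rfl
  inv_mul_cancel f := by ext x; exact f.symm_apply_apply x

section Aux

variable {X : Type*} [TopologicalSpace X]

private lemma hm_mul_apply (a b : X ≃ₜ X) (x : X) : (a * b) x = a (b x) := rfl

private lemma hm_fix_of_not_mem_closure {c : X ≃ₜ X} {x : X}
    (hx : x ∉ closure {y | c y ≠ y}) : c x = x := by
  by_contra hne
  exact hx (subset_closure hne)

private lemma hm_fix_outside {c : X ≃ₜ X} {s : Set X}
    (hs : closure {y | c y ≠ y} ⊆ s) {x : X} (hx : x ∉ s) : c x = x :=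
  hm_fix_of_not_mem_closure (fun hmem => hx (hs hmem))

private lemma hm_maps_self {c : X ≃ₜ X} {s : Set X}
    (hs : closure {y | c y ≠ y} ⊆ s) {x : X} (hx : x ∈ s) : c x ∈ s := by
  by_contra hcx
  have h1 : c (c x) = c x := hm_fix_outside hs hcx
  have h2 := c.injective h1
  rw [h2] at hcx
  exact hcx hx

private lemma hm_supp_symm (a : X ≃ₜ X) : {x | a.symm x ≠ x} = {x | a x ≠ x} := by
  ext x
  simp only [mem_setOf_eq]
  constructor
  · intro hx hax
    have h1 : a.symm (a x) = a.symm x := congrArg a.symm hax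
    rw [a.symm_apply_apply] at h1
    exact hx h1.symm
  · intro hx hax
    have h1 : a (a.symm x) = a x := congrArg a hax
    rw [a.apply_symm_apply] at h1
    exact hx h1.symm

open Classical in
noncomputable def pieceMap (U : ℤ → Set X) (c : ℕ → X ≃ₜ X) : X → X :=
  fun x => if hx : ∃ m : ℕ, x ∈ U (m : ℤ) then c (Classical.choose hx) x else x

lemma pieceMap_of_mem {U : ℤ → Set X} (hdisj : Pairwise (Function.onFun Disjoint U))
    (c : ℕ → X ≃ₜ X) {m : ℕ} {x : X} (hx : x ∈ U (m : ℤ)) :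
    pieceMap U c x = c m x := by
  have hex : ∃ k : ℕ, x ∈ U (k : ℤ) := ⟨m, hx⟩
  rw [pieceMap, dif_pos hex]
  have hspec := Classical.choose_spec hex
  have hkm : ((Classical.choose hex : ℕ) : ℤ) = (m : ℤ) := by
    by_contra hne
    exact Set.disjoint_left.mp (hdisj hne) hspec hx
  rw [Nat.cast_inj.mp hkm]

lemma pieceMap_of_not_mem {U : ℤ → Set X} {c : ℕ → X ≃ₜ X} {x : X}
    (hx : ∀ m : ℕ, x ∉ U (m : ℤ)) : pieceMap U c x = x := by
  rw [pieceMap, dif_neg]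
  rintro ⟨m, hm⟩
  exact hx m hm

end Aux

section AuxCont

variable {X : Type*} [MetricSpace X]

lemma pieceMap_continuous {U : ℤ → Set X}
    (hopen : ∀ m : ℤ, IsOpen (U m))
    (hdisj : Pairwise (Function.onFun Disjoint U))
    (c : ℕ → X ≃ₜ X)
    (hsupp : ∀ m : ℕ, closure {x | c m x ≠ x} ⊆ U (m : ℤ))
    (x₀ : X)
    (hlim₀ : ∀ ε > 0, ∃ N : ℕ, ∀ m : ℕ, N ≤ m → U (m : ℤ) ⊆ Metric.ball x₀ ε)
    (hx₀ : ∀ m : ℕ, x₀ ∉ U (m : ℤ)) :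
    Continuous (pieceMap U c) := by
  rw [continuous_iff_continuousAt]
  intro x
  by_cases hxm : ∃ m : ℕ, x ∈ U (m : ℤ)
  · obtain ⟨m, hm⟩ := hxm
    have hev : pieceMap U c =ᶠ[nhds x] ⇑(c m) :=
      Filter.eventually_of_mem ((hopen m).mem_nhds hm)
        (fun y hy => pieceMap_of_mem hdisj c hy)
    exact ((c m).continuous.continuousAt).congr hev.symm
  · by_cases hx0 : x = x₀
    · subst hx0
      rw [Metric.continuousAt_iff]
      intro ε hε
      obtain ⟨N, hN⟩ := hlim₀ ε hε
      have hCclosed : IsClosed (⋃ m ∈ Finset.range N, closure {y | c m y ≠ y}) :=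
        isClosed_biUnion_finset (fun m _ => isClosed_closure)
      have hx₀C : x ∉ ⋃ m ∈ Finset.range N, closure {y | c m y ≠ y} := by
        simp only [mem_iUnion]
        rintro ⟨m, -, hmem⟩
        exact hx₀ m (hsupp m hmem)
      obtain ⟨δ₁, hδ₁, hballs⟩ := Metric.isOpen_iff.mp hCclosed.isOpen_compl x hx₀C
      refine ⟨min δ₁ ε, lt_min hδ₁ hε, fun y hy => ?_⟩
      rw [pieceMap_of_not_mem hx₀]
      have hyC : y ∉ ⋃ m ∈ Finset.range N, closure {z | c m z ≠ z} :=
        hballs (Metric.mem_ball.mpr (lt_of_lt_of_le hy (min_le_left _ _)))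
      by_cases hym : ∃ m : ℕ, y ∈ U (m : ℤ)
      · obtain ⟨m, hm⟩ := hym
        rw [pieceMap_of_mem hdisj c hm]
        by_cases hyS : y ∈ closure {z | c m z ≠ z}
        · have hmN : N ≤ m := by
            by_contra hlt
            exact hyC (by
              simp only [mem_iUnion]
              exact ⟨m, Finset.mem_range.mpr (Nat.lt_of_not_le hlt), hyS⟩)
          exact hN m hmN (hm_maps_self (hsupp m) hm)
        · rw [hm_fix_of_not_mem_closure hyS]
          exact lt_of_lt_of_le hy (min_le_right _ _)
      · push_neg at hym
        rw [pieceMap_of_not_mem hym]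
        exact lt_of_lt_of_le hy (min_le_right _ _)
    · -- x ≠ x₀ and x in no U m : pieceMap is the identity near x
      push_neg at hxm
      have hd : 0 < dist x x₀ / 2 := by
        have := dist_pos.mpr hx0
        linarith
      obtain ⟨N, hN⟩ := hlim₀ (dist x x₀ / 2) hd
      have hCclosed : IsClosed (⋃ m ∈ Finset.range N, closure {y | c m y ≠ y}) :=
        isClosed_biUnion_finset (fun m _ => isClosed_closure)
      have hxC : x ∉ ⋃ m ∈ Finset.range N, closure {y | c m y ≠ y} := by
        simp only [mem_iUnion]
        rintro ⟨m, -, hmem⟩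
        exact hxm m (hsupp m hmem)
      have hW : IsOpen (Metric.ball x (dist x x₀ / 2) ∩
          (⋃ m ∈ Finset.range N, closure {y | c m y ≠ y})ᶜ) :=
        Metric.isOpen_ball.inter hCclosed.isOpen_compl
      have hxW : x ∈ Metric.ball x (dist x x₀ / 2) ∩
          (⋃ m ∈ Finset.range N, closure {y | c m y ≠ y})ᶜ :=
        ⟨Metric.mem_ball_self hd, hxC⟩
      have hid : ∀ y ∈ Metric.ball x (dist x x₀ / 2) ∩
          (⋃ m ∈ Finset.range N, closure {y | c m y ≠ y})ᶜ, pieceMap U c y = y := by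
        rintro y ⟨hy1, hy2⟩
        by_cases hym : ∃ m : ℕ, y ∈ U (m : ℤ)
        · obtain ⟨m, hm⟩ := hym
          rw [pieceMap_of_mem hdisj c hm]
          apply hm_fix_of_not_mem_closure
          intro hyS
          by_cases hmN : N ≤ m
          · have hy3 : y ∈ Metric.ball x₀ (dist x x₀ / 2) := hN m hmN hm
            have h1 : dist y x < dist x x₀ / 2 := Metric.mem_ball.mp hy1
            have h2 : dist y x₀ < dist x x₀ / 2 := Metric.mem_ball.mp hy3
            have h3 : dist x x₀ ≤ dist x y + dist y x₀ := dist_triangle _ _ _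
            rw [dist_comm x y] at h3
            linarith
          · exact hy2 (by
              simp only [mem_iUnion]
              exact ⟨m, Finset.mem_range.mpr (Nat.lt_of_not_le hmN), hyS⟩)
        · push_neg at hym
          exact pieceMap_of_not_mem hym
      have hev : pieceMap U c =ᶠ[nhds x] id :=
        Filter.eventually_of_mem (hW.mem_nhds hxW) (fun y hy => hid y hy)
      exact continuousAt_id.congr hev.symm

end AuxCont

/-- Given a compactly supported shift `h` of a sequence of disjoint open balls whose
closures shrink to points at both ends, and `g` supported in `U 0`, the map equal to
`hᵐ g h⁻ᵐ` on `U m` for `m ≥ 0` and the identity elsewhere is a homeomorphism `f`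
with `g = f h f⁻¹ h⁻¹`. -/
theorem shift_conjugation_commutator (n : ℕ) (h g : (Fin n → ℝ) ≃ₜ (Fin n → ℝ))
    (hh : IsCompact (closure {x | h x ≠ x}))
    (U : ℤ → Set (Fin n → ℝ))
    (hball : ∀ m : ℤ, ∃ c r, U m = Metric.ball c r)
    (hdisj : Pairwise (Function.onFun Disjoint U))
    (hshift : ∀ m : ℤ, h '' U m = U (m + 1))
    (x₀ x₁ : Fin n → ℝ)
    (hlim₀ : ∀ ε > 0, ∃ N : ℕ, ∀ m : ℕ, N ≤ m → U (m : ℤ) ⊆ Metric.ball x₀ ε)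
    (hlim₁ : ∀ ε > 0, ∃ N : ℕ, ∀ m : ℕ, N ≤ m → U (-(m : ℤ)) ⊆ Metric.ball x₁ ε)
    (hg : closure {x | g x ≠ x} ⊆ U 0) :
    ∃ f : (Fin n → ℝ) ≃ₜ (Fin n → ℝ),
      (∀ m : ℕ, Set.EqOn (⇑f) (⇑(h ^ m * g * (h ^ m)⁻¹)) (U (m : ℤ))) ∧
      (∀ x, x ∉ (⋃ m : ℕ, U (m : ℤ)) → f x = x) ∧
      g = f * h * f⁻¹ * h⁻¹ := by
  classical
  -- openness of the U m
  have hopenU : ∀ k : ℤ, IsOpen (U k) := by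
    intro k
    obtain ⟨cc, r, hcr⟩ := hball k
    rw [hcr]
    exact Metric.isOpen_ball
  -- membership transport along h
  have hmemh : ∀ (k : ℤ) (y : Fin n → ℝ), y ∈ U k → h y ∈ U (k + 1) := by
    intro k y hy
    rw [← hshift k]
    exact mem_image_of_mem h hy
  have hmemh' : ∀ (k : ℤ) (y : Fin n → ℝ), h y ∈ U (k + 1) → y ∈ U k := by
    intro k y hy
    rw [← hshift k] at hy
    obtain ⟨z, hz, hzy⟩ := hy
    rwa [← h.injective hzy]
  -- the conjugates
  set c : ℕ → (Fin n → ℝ) ≃ₜ (Fin n → ℝ) := fun m => h ^ m * g * (h ^ m)⁻¹ with hc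
  -- images of U 0 under powers of h
  have himgU : ∀ m : ℕ, ⇑(h ^ m) '' U 0 = U (m : ℤ) := by
    intro m
    induction m with
    | zero =>
      have h1 : ⇑(h ^ 0 : (Fin n → ℝ) ≃ₜ (Fin n → ℝ)) = id := by rw [pow_zero]; rfl
      rw [h1, image_id]
      norm_num
    | succ k ih =>
      have h1 : ⇑(h ^ (k + 1) : (Fin n → ℝ) ≃ₜ (Fin n → ℝ)) = ⇑h ∘ ⇑(h ^ k : (Fin n → ℝ) ≃ₜ (Fin n → ℝ)) := by
        rw [pow_succ']
        rfl
      rw [h1, image_comp, ih, hshift (k : ℤ)]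
      norm_num
  -- the support of c m is inside U m
  have hsuppc : ∀ m : ℕ, closure {x | c m x ≠ x} ⊆ U (m : ℤ) := by
    intro m
    have himage : {x | c m x ≠ x} = ⇑(h ^ m) '' {x | g x ≠ x} := by
      ext x
      simp only [mem_setOf_eq, Set.mem_image]
      constructor
      · intro hx
        refine ⟨(h ^ m).symm x, ?_, (h ^ m).apply_symm_apply x⟩
        intro hgx
        apply hx
        show (h ^ m) (g ((h ^ m).symm x)) = x
        rw [hgx, (h ^ m).apply_symm_apply]
      · rintro ⟨y, hy, rfl⟩
        intro hcx
        apply hy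
        have h1 : (h ^ m) (g ((h ^ m).symm ((h ^ m) y))) = (h ^ m) y := hcx
        rw [(h ^ m).symm_apply_apply] at h1
        exact (h ^ m).injective h1
    rw [himage, ← (h ^ m).image_closure]
    exact (Set.image_mono hg).trans (himgU m).subset
  have hsuppc' : ∀ m : ℕ, closure {x | (c m)⁻¹ x ≠ x} ⊆ U (m : ℤ) := by
    intro m
    have : {x | (c m)⁻¹ x ≠ x} = {x | c m x ≠ x} := hm_supp_symm (c m)
    rw [this]
    exact hsuppc m
  -- x₀ is in none of the U m, m ≥ 0
  have hx₀U : ∀ m : ℕ, x₀ ∉ U (m : ℤ) := by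
    intro m hmem
    obtain ⟨ε, hε, hsub⟩ := Metric.isOpen_iff.mp (hopenU (m : ℤ)) x₀ hmem
    obtain ⟨N, hN⟩ := hlim₀ ε hε
    have hne : ∀ j : ℕ, (U ((m : ℤ) + j)).Nonempty := by
      intro j
      induction j with
      | zero => exact ⟨x₀, by simpa using hmem⟩
      | succ k ih =>
        obtain ⟨y, hy⟩ := ih
        refine ⟨h y, ?_⟩
        have h1 : h y ∈ U ((m : ℤ) + k + 1) := hmemh _ y hy
        have h2 : ((m : ℤ) + (k + 1 : ℕ)) = (m : ℤ) + k + 1 := by push_cast; ring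
        rwa [h2]
    obtain ⟨y, hy⟩ := hne (N + 1)
    have hyM : y ∈ U ((m + N + 1 : ℕ) : ℤ) := by
      have h2 : ((m + N + 1 : ℕ) : ℤ) = (m : ℤ) + (N + 1 : ℕ) := by push_cast; ring
      rwa [h2]
    have hyball : y ∈ Metric.ball x₀ ε := hN (m + N + 1) (by omega) hyM
    have hyU : y ∈ U (m : ℤ) := hsub hyball
    have hMm : ((m + N + 1 : ℕ) : ℤ) ≠ (m : ℤ) := by
      push_cast; omega
    exact Set.disjoint_left.mp (hdisj hMm) hyM hyU
  -- the underlying maps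
  set F : (Fin n → ℝ) → (Fin n → ℝ) := pieceMap U c with hF
  set F' : (Fin n → ℝ) → (Fin n → ℝ) := pieceMap U (fun m => (c m)⁻¹) with hF'
  have hli : Function.LeftInverse F' F := by
    intro x
    by_cases hx : ∃ m : ℕ, x ∈ U (m : ℤ)
    · obtain ⟨m, hm⟩ := hx
      rw [hF, hF', pieceMap_of_mem hdisj c hm,
        pieceMap_of_mem hdisj _ (hm_maps_self (hsuppc m) hm)]
      exact (c m).symm_apply_apply x
    · push_neg at hx
      rw [hF, hF', pieceMap_of_not_mem hx, pieceMap_of_not_mem hx]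
  have hri : Function.RightInverse F' F := by
    intro x
    by_cases hx : ∃ m : ℕ, x ∈ U (m : ℤ)
    · obtain ⟨m, hm⟩ := hx
      rw [hF, hF', pieceMap_of_mem hdisj _ hm,
        pieceMap_of_mem hdisj c (hm_maps_self (hsuppc' m) hm)]
      exact (c m).apply_symm_apply x
    · push_neg at hx
      rw [hF, hF', pieceMap_of_not_mem hx, pieceMap_of_not_mem hx]
  have hFc : Continuous F :=
    pieceMap_continuous hopenU hdisj c hsuppc x₀ hlim₀ hx₀U
  have hF'c : Continuous F' :=
    pieceMap_continuous hopenU hdisj _ hsuppc' x₀ hlim₀ hx₀U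
  set f : (Fin n → ℝ) ≃ₜ (Fin n → ℝ) := ⟨⟨F, F', hli, hri⟩, hFc, hF'c⟩ with hfdef
  refine ⟨f, ?_, ?_, ?_⟩
  · intro m x hx
    exact pieceMap_of_mem hdisj c hx
  · intro x hx
    apply pieceMap_of_not_mem
    intro m hm
    exact hx (mem_iUnion.mpr ⟨m, hm⟩)
  · -- the commutator identity
    have hgfix : ∀ x, x ∉ U 0 → g x = x := fun x hx => hm_fix_outside hg hx
    have hK : ∀ y : Fin n → ℝ, F (h y) = g (h (F y)) := by
      intro y
      by_cases hy : ∃ m : ℕ, y ∈ U (m : ℤ)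
      · obtain ⟨m, hm⟩ := hy
        have hFy : F y = c m y := pieceMap_of_mem hdisj c hm
        have hcy : c m y ∈ U (m : ℤ) := hm_maps_self (hsuppc m) hm
        have hhy : h y ∈ U ((m + 1 : ℕ) : ℤ) := by
          have := hmemh (m : ℤ) y hm
          rwa [show ((m + 1 : ℕ) : ℤ) = (m : ℤ) + 1 by push_cast; ring]
        have hFhy : F (h y) = c (m + 1) (h y) := pieceMap_of_mem hdisj c hhy
        have hconj : c (m + 1) = h * c m * h⁻¹ := by
          rw [hc]
          simp only
          rw [pow_succ']
          group
        have hstep : c (m + 1) (h y) = h (c m y) := by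
          rw [hconj]
          show h ((c m) (h.symm (h y))) = h (c m y)
          rw [h.symm_apply_apply]
        have hcyh : h (c m y) ∈ U ((m : ℤ) + 1) := hmemh (m : ℤ) _ hcy
        have hnot0 : h (c m y) ∉ U 0 := by
          intro hmem0
          have hne : ((m : ℤ) + 1) ≠ (0 : ℤ) := by omega
          exact Set.disjoint_left.mp (hdisj hne) hcyh hmem0
        rw [hFhy, hstep, hFy, hgfix _ hnot0]
      · push_neg at hy
        have hFy : F y = y := pieceMap_of_not_mem hy
        rw [hFy]
        by_cases hk : ∃ k : ℕ, h y ∈ U (k : ℤ)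
        · obtain ⟨k, hkm⟩ := hk
          match k with
          | 0 =>
            have hFhy : F (h y) = c 0 (h y) := pieceMap_of_mem hdisj c hkm
            have hc0 : c 0 = g := by
              rw [hc]
              simp only
              rw [pow_zero]
              group
            rw [hFhy, hc0]
          | (j + 1) =>
            exfalso
            have h1 : h y ∈ U ((j : ℤ) + 1) := by
              rwa [show ((j + 1 : ℕ) : ℤ) = (j : ℤ) + 1 by push_cast; ring] at hkm
            exact hy j (hmemh' (j : ℤ) y h1)
        · push_neg at hk
          have hFhy : F (h y) = h y := pieceMap_of_not_mem hk
          have hnot0 : h y ∉ U 0 := by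
            have := hk 0
            simpa using this
          rw [hFhy, hgfix _ hnot0]
    have hfh : f * h = g * h * f := by
      apply Homeomorph.ext
      intro y
      exact hK y
    rw [hfh]
    group
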